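/- arXiv:1312.0811 — 2 statements merged into one kernel-verified Lean document; each statement's English description precedes it below -/
import Mathlib

section
/- Fix u₀ ∈ K. Then there exists a constant C'' ≥ 0, depending only on c, C₀, R₀, q and ‖u₀‖, such that −C'' ( 1 + ‖z‖^p ) ≤ h(z) ≤ C'' ( 1 + ‖z‖ ) for all z ∈ Ξ. -/
private lemma norm_le_one_add_rpow {t p : ℝ} (ht : 0 ≤ t) (hp : 1 ≤ p) :
    t ≤ 1 + t ^ p := by
  rcases le_total t 1 with h | h
  · have : 0 ≤ t ^ p := Real.rpow_nonneg ht p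
    linarith
  · have h1 : t ^ (1 : ℝ) ≤ t ^ p := Real.rpow_le_rpow_of_exponent_le h hp
    rw [Real.rpow_one] at h1
    linarith

/-- two-sided growth bounds for the Hamiltonian
`h(z) = inf_{u ∈ K} (g(u) + ⟪z, R(u)⟫)`: given `u₀ ∈ K`, there is a constant
`C'' ≥ 0`, depending only on `c`, `C₀`, `R₀`, `q` and `‖u₀‖`, such that
`-C'' (1 + ‖z‖^p) ≤ h(z) ≤ C'' (1 + ‖z‖)` for all `z`, where `p = q/(q-1)`. -/
theorem hamiltonian_growth_bounds (c C₀ R₀ q ν : ℝ)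
    (hq1 : 1 < q) (hq2 : q ≤ 2) (hc : 0 < c) (hC₀ : 0 < C₀) (hR₀ : 0 < R₀) :
    ∃ C'' : ℝ, 0 ≤ C'' ∧
      ∀ (U : Type*) [NormedAddCommGroup U] [NormedSpace ℝ U]
        (Ξ : Type*) [NormedAddCommGroup Ξ] [InnerProductSpace ℝ Ξ]
        (K : Set U) (u₀ : U), u₀ ∈ K → ‖u₀‖ = ν →
      ∀ (g : U → ℝ) (R : U → Ξ),
        (∀ u, 0 ≤ g u) → (∀ u, g u ≤ c * (1 + ‖u‖ ^ q)) →
        (∀ u ∈ K, R₀ ≤ ‖u‖ → C₀ * ‖u‖ ^ q ≤ g u) →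
        (∀ u, ‖R u‖ ≤ c * (1 + ‖u‖)) →
        ∀ z : Ξ,
          -C'' * (1 + ‖z‖ ^ (q / (q - 1)))
              ≤ sInf ((fun v => g v + (inner ℝ z (R v) : ℝ)) '' K) ∧
          sInf ((fun v => g v + (inner ℝ z (R v) : ℝ)) '' K) ≤ C'' * (1 + ‖z‖) := by
  set p : ℝ := q / (q - 1) with hpdef
  have hpq : q.HolderConjugate p := Real.HolderConjugate.conjExponent hq1
  have hq0 : 0 < q := lt_trans one_pos hq1
  have hp1 : 1 < p := hpq.symm.lt
  have hp0 : 0 < p := lt_trans one_pos hp1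
  -- the Young constant
  set D : ℝ := (q * C₀) ^ (1 / q) with hDdef
  have hD0 : 0 < D := Real.rpow_pos_of_pos (by positivity) _
  set A : ℝ := (c / D) ^ p / p with hAdef
  have hA0 : 0 ≤ A := by positivity
  set B : ℝ := max (c * (1 + R₀)) (c + A) with hBdef
  have hB0 : 0 ≤ B := le_trans (by positivity) (le_max_left _ _)
  set Cu : ℝ := c * (1 + |ν| ^ q) + c * (1 + |ν|) with hCudef
  have hCu0 : 0 ≤ Cu := by positivity
  refine ⟨max B Cu, le_trans hB0 (le_max_left _ _), ?_⟩
  intro U _ _ Ξ _ _ K u₀ hu₀ hν g R hg0 hgub hglb hRub z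
  have hν0 : 0 ≤ ν := hν ▸ norm_nonneg u₀
  have habs : |ν| = ν := abs_of_nonneg hν0
  set S : Set ℝ := (fun v => g v + (inner ℝ z (R v) : ℝ)) '' K with hSdef
  have hSne : S.Nonempty := ⟨_, ⟨u₀, hu₀, rfl⟩⟩
  have hz0 : (0 : ℝ) ≤ ‖z‖ := norm_nonneg z
  have hz1 : ‖z‖ ≤ 1 + ‖z‖ ^ p := norm_le_one_add_rpow hz0 hp1.le
  have hzp0 : 0 ≤ ‖z‖ ^ p := Real.rpow_nonneg hz0 p
  -- pointwise lower bound
  have key : ∀ y ∈ S, -B * (1 + ‖z‖ ^ p) ≤ y := by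
    rintro y ⟨v, hv, rfl⟩
    show -B * (1 + ‖z‖ ^ p) ≤ g v + (inner ℝ z (R v) : ℝ)
    have hinner : -(‖z‖ * (c * (1 + ‖v‖))) ≤ (inner ℝ z (R v) : ℝ) := by
      have h1 : |(inner ℝ z (R v) : ℝ)| ≤ ‖z‖ * ‖R v‖ := abs_real_inner_le_norm z (R v)
      have h2 : ‖z‖ * ‖R v‖ ≤ ‖z‖ * (c * (1 + ‖v‖)) :=
        mul_le_mul_of_nonneg_left (hRub v) hz0
      have := neg_abs_le (inner ℝ z (R v) : ℝ)
      linarith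
    rcases lt_or_ge ‖v‖ R₀ with hcase | hcase
    · have h3 : ‖z‖ * (c * (1 + ‖v‖)) ≤ ‖z‖ * (c * (1 + R₀)) := by
        have : c * (1 + ‖v‖) ≤ c * (1 + R₀) := by nlinarith
        exact mul_le_mul_of_nonneg_left this hz0
      have h4 : ‖z‖ * (c * (1 + R₀)) ≤ (c * (1 + R₀)) * (1 + ‖z‖ ^ p) := by
        rw [mul_comm]
        exact mul_le_mul_of_nonneg_left hz1 (by positivity)
      have h5 : c * (1 + R₀) ≤ B := le_max_left _ _
      have h6 : (c * (1 + R₀)) * (1 + ‖z‖ ^ p) ≤ B * (1 + ‖z‖ ^ p) :=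
        mul_le_mul_of_nonneg_right h5 (by linarith)
      have := hg0 v
      linarith
    · have hgv : C₀ * ‖v‖ ^ q ≤ g v := hglb v hv hcase
      -- Young's inequality
      have hY : (D * ‖v‖) * (c * ‖z‖ / D) ≤ (D * ‖v‖) ^ q / q + (c * ‖z‖ / D) ^ p / p :=
        Real.young_inequality_of_nonneg (by positivity) (by positivity) hpq
      have hv0 : (0 : ℝ) ≤ ‖v‖ := norm_nonneg v
      have hleft : (D * ‖v‖) * (c * ‖z‖ / D) = c * ‖z‖ * ‖v‖ := by
        field_simp
      have hDq : D ^ q = q * C₀ := by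
        rw [hDdef, ← Real.rpow_mul (by positivity), one_div_mul_cancel hq0.ne',
          Real.rpow_one]
      have ha : (D * ‖v‖) ^ q / q = C₀ * ‖v‖ ^ q := by
        rw [Real.mul_rpow hD0.le hv0, hDq]
        field_simp
      have hb : (c * ‖z‖ / D) ^ p / p = A * ‖z‖ ^ p := by
        have : c * ‖z‖ / D = (c / D) * ‖z‖ := by ring
        rw [this, Real.mul_rpow (by positivity) hz0, hAdef]
        ring
      rw [hleft, ha, hb] at hY
      have h5 : c + A ≤ B := le_max_right _ _
      have h6 : (c + A) * (1 + ‖z‖ ^ p) ≤ B * (1 + ‖z‖ ^ p) :=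
        mul_le_mul_of_nonneg_right h5 (by linarith)
      have h7 : c * ‖z‖ ≤ c * (1 + ‖z‖ ^ p) := mul_le_mul_of_nonneg_left hz1 hc.le
      linarith
  have hbdd : BddBelow S := ⟨-B * (1 + ‖z‖ ^ p), key⟩
  constructor
  · refine le_csInf hSne fun y hy => le_trans ?_ (key y hy)
    have : B ≤ max B Cu := le_max_left _ _
    nlinarith
  · have h1 : sInf S ≤ g u₀ + (inner ℝ z (R u₀) : ℝ) := csInf_le hbdd ⟨u₀, hu₀, rfl⟩
    have h2 : (inner ℝ z (R u₀) : ℝ) ≤ ‖z‖ * (c * (1 + ν)) := by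
      calc (inner ℝ z (R u₀) : ℝ) ≤ ‖z‖ * ‖R u₀‖ := real_inner_le_norm z (R u₀)
        _ ≤ ‖z‖ * (c * (1 + ν)) := by
            rw [← hν]; exact mul_le_mul_of_nonneg_left (hRub u₀) hz0
    have h3 : g u₀ ≤ c * (1 + ν ^ q) := by rw [← hν]; exact hgub u₀
    have hνq0 : 0 ≤ ν ^ q := Real.rpow_nonneg hν0 q
    have h4 : c * (1 + ν ^ q) + c * (1 + ν) ≤ max B Cu := by
      rw [show c * (1 + ν ^ q) + c * (1 + ν) = Cu by rw [hCudef, habs]]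
      exact le_max_right _ _
    have h8 : (c * (1 + ν ^ q) + c * (1 + ν)) * (1 + ‖z‖) ≤ max B Cu * (1 + ‖z‖) :=
      mul_le_mul_of_nonneg_right h4 (by linarith)
    have h9 : g u₀ + (inner ℝ z (R u₀) : ℝ)
        ≤ (c * (1 + ν ^ q) + c * (1 + ν)) * (1 + ‖z‖) := by
      nlinarith [mul_nonneg (mul_nonneg hc.le hνq0) hz0, mul_nonneg hc.le hz0,
        mul_nonneg hc.le hν0]
    linarith
end

section
/- Let r ≥ 0 and let f : H → ℝ be continuous and satisfy |f(x) − f(x')| ≤ ( c + (β/2)‖x‖^r + (β/2)‖x'‖^r ) ‖x − x'‖ for all x, x' ∈ H, where c, β ≥ 0 are constants. Then the regularization f̃ satisfies |f̃(x) − f̃(x')| ≤ ( c + (β/2)(‖x‖ + δ)^r + (β/2)(‖x'‖ + δ)^r ) ‖x − x'‖ for all x, x' ∈ H. -/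
open MeasureTheory

/-- `Pn x = (⟪x, e 0⟫, …, ⟪x, e (n-1)⟫) ∈ ℝⁿ`. -/
noncomputable def projCoeff {H : Type*} [NormedAddCommGroup H] [InnerProductSpace ℝ H]
    (e : ℕ → H) (n : ℕ) (x : H) : EuclideanSpace ℝ (Fin n) :=
  WithLp.toLp 2 (fun i => (inner ℝ x (e (i : ℕ)) : ℝ))

/-- `ιn y = Σ_{i<n} y i • e i ∈ H`. -/
noncomputable def embedCoeff {H : Type*} [NormedAddCommGroup H] [InnerProductSpace ℝ H]
    (e : ℕ → H) (n : ℕ) (y : EuclideanSpace ℝ (Fin n)) : H :=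
  ∑ i : Fin n, y i • e (i : ℕ)

/-- The regularization `f̃(x) = ∫_{ℝⁿ} ρ(y - Pn x) f(ιn y) dy` of `f : H → ℝ`. -/
noncomputable def regularization {H : Type*} [NormedAddCommGroup H] [InnerProductSpace ℝ H]
    (e : ℕ → H) (n : ℕ) (ρ : EuclideanSpace ℝ (Fin n) → ℝ) (f : H → ℝ) (x : H) : ℝ :=
  ∫ y : EuclideanSpace ℝ (Fin n), ρ (y - projCoeff e n x) * f (embedCoeff e n y)

section Aux

variable {H : Type*} [NormedAddCommGroup H] [InnerProductSpace ℝ H]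

lemma norm_embedCoeff {e : ℕ → H} (he : Orthonormal ℝ e) (n : ℕ)
    (y : EuclideanSpace ℝ (Fin n)) : ‖embedCoeff e n y‖ = ‖y‖ := by
  have hon : Orthonormal ℝ (fun i : Fin n => e (i : ℕ)) :=
    he.comp _ (fun a b h => Fin.ext (by simpa using h))
  have h1 : (inner ℝ (embedCoeff e n y) (embedCoeff e n y) : ℝ) = ∑ i : Fin n, y i * y i := by
    simpa [embedCoeff] using hon.inner_sum y y Finset.univ
  have h2 : ‖embedCoeff e n y‖ ^ 2 = ‖y‖ ^ 2 := by
    rw [← real_inner_self_eq_norm_sq, h1, EuclideanSpace.norm_eq,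
      Real.sq_sqrt (by positivity)]
    simp [sq_abs, sq]
  nlinarith [norm_nonneg (embedCoeff e n y), norm_nonneg y]

lemma embedCoeff_sub (e : ℕ → H) (n : ℕ) (a b : EuclideanSpace ℝ (Fin n)) :
    embedCoeff e n a - embedCoeff e n b = embedCoeff e n (a - b) := by
  simp [embedCoeff, sub_smul, Finset.sum_sub_distrib]

lemma projCoeff_sub (e : ℕ → H) (n : ℕ) (x x' : H) :
    projCoeff e n x - projCoeff e n x' = projCoeff e n (x - x') := by
  ext i
  simp [projCoeff, inner_sub_left]

lemma norm_projCoeff_le {e : ℕ → H} (he : Orthonormal ℝ e) (n : ℕ) (x : H) :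
    ‖projCoeff e n x‖ ≤ ‖x‖ := by
  have hb : ∑ i ∈ Finset.range n, ‖(inner ℝ (e i) x : ℝ)‖ ^ 2 ≤ ‖x‖ ^ 2 :=
    he.sum_inner_products_le x
  have h2 : ‖projCoeff e n x‖ ^ 2 ≤ ‖x‖ ^ 2 := by
    rw [EuclideanSpace.norm_eq, Real.sq_sqrt (by positivity)]
    calc ∑ i : Fin n, ‖projCoeff e n x i‖ ^ 2
        = ∑ i ∈ Finset.range n, ‖(inner ℝ (e i) x : ℝ)‖ ^ 2 := by
          rw [← Fin.sum_univ_eq_sum_range]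
          simp [projCoeff, real_inner_comm]
      _ ≤ ‖x‖ ^ 2 := hb
  nlinarith [norm_nonneg (projCoeff e n x), norm_nonneg x]

lemma continuous_embedCoeff (e : ℕ → H) (n : ℕ) : Continuous (embedCoeff e n) := by
  unfold embedCoeff
  exact continuous_finset_sum _ fun i _ =>
    ((EuclideanSpace.proj i).continuous).smul continuous_const

end Aux

/-- the regularization preserves a locally Lipschitz modulus with
polynomial weight: if `|f(x) - f(x')| ≤ (c + (β/2)‖x‖^r + (β/2)‖x'‖^r) ‖x - x'‖`,
then `|f̃(x) - f̃(x')| ≤ (c + (β/2)(‖x‖+δ)^r + (β/2)(‖x'‖+δ)^r) ‖x - x'‖`. -/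
theorem regularization_preserves_local_lipschitz_modulus
    {H : Type*} [NormedAddCommGroup H] [InnerProductSpace ℝ H] [CompleteSpace H]
    [TopologicalSpace.SeparableSpace H]
    (e : ℕ → H) (he : Orthonormal ℝ e) (n : ℕ) (δ : ℝ) (hδ : 0 < δ)
    (ρ : EuclideanSpace ℝ (Fin n) → ℝ) (hmeas : Measurable ρ) (hint : Integrable ρ)
    (hnonneg : ∀ y, 0 ≤ ρ y) (hsupp : ∀ y, ρ y ≠ 0 → ‖y‖ ≤ δ) (hone : (∫ y, ρ y) = 1)
    (r c β : ℝ) (hr : 0 ≤ r) (hc : 0 ≤ c) (hβ : 0 ≤ β)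
    (f : H → ℝ) (hcont : Continuous f)
    (hf : ∀ x x', |f x - f x'| ≤ (c + β / 2 * ‖x‖ ^ r + β / 2 * ‖x'‖ ^ r) * ‖x - x'‖) :
    ∀ x x' : H,
      |regularization e n ρ f x - regularization e n ρ f x'|
        ≤ (c + β / 2 * (‖x‖ + δ) ^ r + β / 2 * (‖x'‖ + δ) ^ r) * ‖x - x'‖ := by
  -- change of variables
  have hshift : ∀ v : H, regularization e n ρ f v
      = ∫ z, ρ z * f (embedCoeff e n (z + projCoeff e n v)) := by
    intro v
    rw [regularization,
      ← integral_add_right_eq_self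
        (fun y => ρ (y - projCoeff e n v) * f (embedCoeff e n y)) (projCoeff e n v)]
    simp
  -- integrability of the shifted integrand
  have hintg : ∀ v : H,
      Integrable (fun z => ρ z * f (embedCoeff e n (z + projCoeff e n v))) := by
    intro v
    set C : ℝ := |f 0| + (c + β / 2 * (‖v‖ + δ) ^ r + β / 2) * (‖v‖ + δ) with hC
    refine (hint.const_mul C).mono' ?_ ?_
    · exact (hmeas.mul ((hcont.comp ((continuous_embedCoeff e n).comp
        (continuous_id.add continuous_const))).measurable)).aestronglyMeasurable
    · refine Filter.Eventually.of_forall fun z => ?_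
      rcases eq_or_ne (ρ z) 0 with h0 | h0
      · simp [h0]
      · have hz : ‖z‖ ≤ δ := hsupp z h0
        set u : H := embedCoeff e n (z + projCoeff e n v) with hu
        have hun : ‖u‖ ≤ ‖v‖ + δ := by
          calc ‖u‖ = ‖z + projCoeff e n v‖ := norm_embedCoeff he n _
            _ ≤ ‖z‖ + ‖projCoeff e n v‖ := norm_add_le _ _
            _ ≤ δ + ‖v‖ := add_le_add hz (norm_projCoeff_le he n v)
            _ = ‖v‖ + δ := by ring
        have hfu : |f u| ≤ C := by
          have h1 := hf u 0
          have h2 : ‖(0:H)‖ ^ r ≤ 1 := by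
            rw [norm_zero]
            exact Real.rpow_le_one le_rfl zero_le_one hr
          have h3 : ‖u‖ ^ r ≤ (‖v‖ + δ) ^ r :=
            Real.rpow_le_rpow (norm_nonneg u) hun hr
          have h4 : |f u| ≤ |f u - f 0| + |f 0| := by
            calc |f u| = |(f u - f 0) + f 0| := by ring_nf
              _ ≤ |f u - f 0| + |f 0| := abs_add_le _ _
          have h5 : (c + β / 2 * ‖u‖ ^ r + β / 2 * ‖(0:H)‖ ^ r) * ‖u - 0‖
              ≤ (c + β / 2 * (‖v‖ + δ) ^ r + β / 2) * (‖v‖ + δ) := by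
            rw [sub_zero]
            have hnn : (0:ℝ) ≤ c + β / 2 * ‖u‖ ^ r + β / 2 * ‖(0:H)‖ ^ r := by
              have := Real.rpow_nonneg (norm_nonneg u) r
              have := Real.rpow_nonneg (norm_nonneg (0:H)) r
              positivity
            have hb2 : β / 2 * ‖(0:H)‖ ^ r ≤ β / 2 :=
              le_trans (mul_le_mul_of_nonneg_left h2 (by positivity)) (by linarith)
            have hb3 : β / 2 * ‖u‖ ^ r ≤ β / 2 * (‖v‖ + δ) ^ r :=
              mul_le_mul_of_nonneg_left h3 (by positivity)
            have := Real.rpow_nonneg (add_nonneg (norm_nonneg v) hδ.le) r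
            refine mul_le_mul (by linarith) hun (norm_nonneg u) (by positivity)
          calc |f u| ≤ |f u - f 0| + |f 0| := h4
            _ ≤ (c + β / 2 * ‖u‖ ^ r + β / 2 * ‖(0:H)‖ ^ r) * ‖u - 0‖ + |f 0| :=
              add_le_add_left h1 _
            _ ≤ (c + β / 2 * (‖v‖ + δ) ^ r + β / 2) * (‖v‖ + δ) + |f 0| :=
              add_le_add_left h5 _
            _ = C := by rw [hC]; ring
        calc ‖ρ z * f u‖ = ρ z * |f u| := by
              rw [Real.norm_eq_abs, abs_mul, abs_of_nonneg (hnonneg z)]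
          _ ≤ ρ z * C := mul_le_mul_of_nonneg_left hfu (hnonneg z)
          _ = C * ρ z := mul_comm _ _
  intro x x'
  set M : ℝ := (c + β / 2 * (‖x‖ + δ) ^ r + β / 2 * (‖x'‖ + δ) ^ r) * ‖x - x'‖ with hM
  have hMnn : 0 ≤ M := by
    have h1 := Real.rpow_nonneg (add_nonneg (norm_nonneg x) hδ.le) r
    have h2 := Real.rpow_nonneg (add_nonneg (norm_nonneg x') hδ.le) r
    positivity
  rw [hshift x, hshift x', ← integral_sub (hintg x) (hintg x')]
  -- pointwise bound
  have hpt : ∀ z, |ρ z * f (embedCoeff e n (z + projCoeff e n x))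
      - ρ z * f (embedCoeff e n (z + projCoeff e n x'))| ≤ M * ρ z := by
    intro z
    rcases eq_or_ne (ρ z) 0 with h0 | h0
    · simp [h0]
    · have hz : ‖z‖ ≤ δ := hsupp z h0
      set u : H := embedCoeff e n (z + projCoeff e n x) with hu
      set u' : H := embedCoeff e n (z + projCoeff e n x') with hu'
      have hdiff : ‖u - u'‖ ≤ ‖x - x'‖ := by
        rw [hu, hu', embedCoeff_sub]
        have : (z + projCoeff e n x) - (z + projCoeff e n x')
            = projCoeff e n (x - x') := by
          rw [add_sub_add_left_eq_sub, projCoeff_sub]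
        rw [this, norm_embedCoeff he n]
        exact norm_projCoeff_le he n _
      have hun : ‖u‖ ^ r ≤ (‖x‖ + δ) ^ r := by
        refine Real.rpow_le_rpow (norm_nonneg u) ?_ hr
        calc ‖u‖ = ‖z + projCoeff e n x‖ := norm_embedCoeff he n _
          _ ≤ ‖z‖ + ‖projCoeff e n x‖ := norm_add_le _ _
          _ ≤ δ + ‖x‖ := add_le_add hz (norm_projCoeff_le he n x)
          _ = ‖x‖ + δ := by ring
      have hun' : ‖u'‖ ^ r ≤ (‖x'‖ + δ) ^ r := by
        refine Real.rpow_le_rpow (norm_nonneg u') ?_ hr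
        calc ‖u'‖ = ‖z + projCoeff e n x'‖ := norm_embedCoeff he n _
          _ ≤ ‖z‖ + ‖projCoeff e n x'‖ := norm_add_le _ _
          _ ≤ δ + ‖x'‖ := add_le_add hz (norm_projCoeff_le he n x')
          _ = ‖x'‖ + δ := by ring
      have hfd : |f u - f u'| ≤ M := by
        calc |f u - f u'| ≤ (c + β / 2 * ‖u‖ ^ r + β / 2 * ‖u'‖ ^ r) * ‖u - u'‖ := hf u u'
          _ ≤ M := by
            rw [hM]
            have h1 := Real.rpow_nonneg (norm_nonneg u) r
            have h2 := Real.rpow_nonneg (norm_nonneg u') r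
            refine mul_le_mul ?_ hdiff (norm_nonneg _) ?_
            · have hb1 : β / 2 * ‖u‖ ^ r ≤ β / 2 * (‖x‖ + δ) ^ r :=
                mul_le_mul_of_nonneg_left hun (by positivity)
              have hb2 : β / 2 * ‖u'‖ ^ r ≤ β / 2 * (‖x'‖ + δ) ^ r :=
                mul_le_mul_of_nonneg_left hun' (by positivity)
              linarith
            · have := Real.rpow_nonneg (add_nonneg (norm_nonneg x) hδ.le) r
              have := Real.rpow_nonneg (add_nonneg (norm_nonneg x') hδ.le) r
              positivity
      calc |ρ z * f u - ρ z * f u'| = ρ z * |f u - f u'| := by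
            rw [← mul_sub, abs_mul, abs_of_nonneg (hnonneg z)]
        _ ≤ ρ z * M := mul_le_mul_of_nonneg_left hfd (hnonneg z)
        _ = M * ρ z := mul_comm _ _
  have habs := norm_integral_le_integral_norm (μ := volume)
    (fun z => ρ z * f (embedCoeff e n (z + projCoeff e n x))
      - ρ z * f (embedCoeff e n (z + projCoeff e n x')))
  calc |∫ z, (ρ z * f (embedCoeff e n (z + projCoeff e n x))
          - ρ z * f (embedCoeff e n (z + projCoeff e n x')))|
      ≤ ∫ z, |ρ z * f (embedCoeff e n (z + projCoeff e n x))
          - ρ z * f (embedCoeff e n (z + projCoeff e n x'))| := by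
        simpa [Real.norm_eq_abs] using habs
    _ ≤ ∫ z, M * ρ z := by
        refine integral_mono ((hintg x).sub (hintg x')).abs (hint.const_mul M) hpt
    _ = M := by rw [integral_const_mul, hone, mul_one]
end
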